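/- Let F : ℝᵈ → ℝ be integrable and supported in the ball B(0,R), and let (Wₙ) be bounded measurable sets with |Wₙ| → ∞ and |∂Wₙ ⊕ R| = o(|Wₙ|). Then (1/|Wₙ|) ∫_{Wₙ} ∫_{Wₙ} F(v − u) dv du → ∫_{ℝᵈ} F(t) dt as n → ∞. -/

import Mathlib

open MeasureTheory Metric Filter

theorem average_double_integral_tendsto_integral {d : ℕ} (R : ℝ) (hR : 0 < R)
    (F : EuclideanSpace ℝ (Fin d) → ℝ)
    (hFint : Integrable F)
    (hFsupp : ∀ t, R < ‖t‖ → F t = 0)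
    (W : ℕ → Set (EuclideanSpace ℝ (Fin d)))
    (hWb : ∀ n, Bornology.IsBounded (W n))
    (hWm : ∀ n, MeasurableSet (W n))
    (hvol : Tendsto (fun n => (volume (W n)).toReal) atTop atTop)
    (hbdry : Tendsto
      (fun n => (volume (cthickening R (frontier (W n)))).toReal / (volume (W n)).toReal)
      atTop (nhds 0)) :
    Tendsto
      (fun n => (1 / (volume (W n)).toReal) * ∫ u in W n, ∫ v in W n, F (v - u))
      atTop (nhds (∫ t, F t)) := by
  set I : ℝ := ∫ t, F t with hI
  set C : ℝ := ∫ t, ‖F t‖ with hC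
  have hC0 : 0 ≤ C := integral_nonneg fun t => norm_nonneg _
  -- key per-n estimate
  have key : ∀ n, ‖(∫ u in W n, ∫ v in W n, F (v - u)) - I * (volume (W n)).toReal‖
      ≤ (|I| + C) * (volume (cthickening R (frontier (W n)))).toReal := by
    intro n
    set A : Set (EuclideanSpace ℝ (Fin d)) := W n with hA
    set B : Set (EuclideanSpace ℝ (Fin d)) := cthickening R (frontier A) with hB
    have hAm : MeasurableSet A := hWm n
    have hBm : MeasurableSet B := (isClosed_cthickening).measurableSet
    have hAvol : volume A < ⊤ := (hWb n).measure_lt_top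
    have hBvol : volume B < ⊤ := by
      have : Bornology.IsBounded B := ((hWb n).closure.subset frontier_subset_closure).cthickening
      exact this.measure_lt_top
    set μA := volume.restrict A with hμA
    haveI : IsFiniteMeasure μA :=
      ⟨by simpa [hμA, Measure.restrict_apply_univ] using hAvol⟩
    -- integrand is a.e. strongly measurable on product
    have hΦaesm0 : AEStronglyMeasurable (fun p : EuclideanSpace ℝ (Fin d) × EuclideanSpace ℝ (Fin d) => F (p.2 - p.1))
        ((volume : Measure (EuclideanSpace ℝ (Fin d))).prod volume) := by
      have h1 : AEStronglyMeasurable (fun p : EuclideanSpace ℝ (Fin d) × EuclideanSpace ℝ (Fin d) => F p.1)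
          ((volume : Measure (EuclideanSpace ℝ (Fin d))).prod volume) := hFint.1.comp_fst
      have h2 : AEStronglyMeasurable (fun p : EuclideanSpace ℝ (Fin d) × EuclideanSpace ℝ (Fin d) => F (p.1 - p.2))
          ((volume : Measure (EuclideanSpace ℝ (Fin d))).prod volume) :=
        h1.comp_quasiMeasurePreserving
          (measurePreserving_sub_prod volume volume).quasiMeasurePreserving
      exact h2.comp_quasiMeasurePreserving
        (Measure.measurePreserving_swap).quasiMeasurePreserving
    have hΦaesm : AEStronglyMeasurable (fun p : EuclideanSpace ℝ (Fin d) × EuclideanSpace ℝ (Fin d) => F (p.2 - p.1)) (μA.prod μA) := by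
      rw [hμA, Measure.prod_restrict]
      exact hΦaesm0.restrict
    -- inner integrand integrable for each u, and uniform bound
    have hFu : ∀ u : EuclideanSpace ℝ (Fin d), Integrable (fun v => F (v - u)) (volume : Measure (EuclideanSpace ℝ (Fin d))) := fun u =>
      hFint.comp_sub_right u
    have hnorm_int : ∀ u : EuclideanSpace ℝ (Fin d), (∫ v, ‖F (v - u)‖) = C := fun u =>
      integral_sub_right_eq_self (fun t => ‖F t‖) u
    have hbound : ∀ u : EuclideanSpace ℝ (Fin d), ∫ v, ‖F (v - u)‖ ∂μA ≤ C := by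
      intro u
      calc ∫ v, ‖F (v - u)‖ ∂μA ≤ ∫ v, ‖F (v - u)‖ :=
            setIntegral_le_integral (hFu u).norm
              (Eventually.of_forall fun v => norm_nonneg _)
        _ = C := hnorm_int u
    -- integrability on the product
    have hΦint : Integrable (fun p : EuclideanSpace ℝ (Fin d) × EuclideanSpace ℝ (Fin d) => F (p.2 - p.1)) (μA.prod μA) := by
      rw [integrable_prod_iff hΦaesm]
      refine ⟨Eventually.of_forall fun u => (hFu u).restrict, ?_⟩
      refine Integrable.mono' (integrable_const C) (hΦaesm.norm.integral_prod_right')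
        (Eventually.of_forall fun u => ?_)
      have h0 : 0 ≤ ∫ v, ‖F (v - u)‖ ∂μA :=
        integral_nonneg fun v => norm_nonneg _
      rw [Real.norm_of_nonneg h0]
      exact hbound u
    have hg_int : IntegrableOn (fun u => ∫ v in A, F (v - u)) A := by
      have := hΦint.integral_prod_left
      exact this
    -- uniform bound on the inner integral
    have hg_bound : ∀ u : EuclideanSpace ℝ (Fin d), ‖∫ v in A, F (v - u)‖ ≤ C := by
      intro u
      calc ‖∫ v in A, F (v - u)‖ ≤ ∫ v in A, ‖F (v - u)‖ := norm_integral_le_integral_norm _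
        _ ≤ C := hbound u
    -- on A \ B, the inner integral equals I
    have hg_eq : ∀ u ∈ A \ B, (∫ v in A, F (v - u)) = I := by
      rintro u ⟨huA, huB⟩
      have hball : closedBall u R ⊆ A := by
        intro v hv
        by_contra hvA
        have hAne : A ≠ Set.univ := fun h => hvA (h ▸ Set.mem_univ v)
        obtain ⟨y, hy, hdy⟩ := exists_mem_frontier_infDist_compl_eq_dist huA hAne
        have h1 : dist u y ≤ R := by
          rw [← hdy]
          exact le_trans (infDist_le_dist_of_mem hvA) (mem_closedBall'.mp hv)
        exact huB (mem_cthickening_of_dist_le u y R (frontier A) hy h1)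
      have h2 : ∀ v, v ∉ A → F (v - u) = 0 := by
        intro v hvA
        apply hFsupp
        have : v ∉ closedBall u R := fun h => hvA (hball h)
        have := (not_le).mp (fun h => this (mem_closedBall.mpr h))
        rwa [dist_eq_norm] at this
      rw [setIntegral_eq_integral_of_forall_compl_eq_zero h2]
      exact integral_sub_right_eq_self F u
    -- split the integral
    have hABm : MeasurableSet (A ∩ B) := hAm.inter hBm
    have hsplit : (∫ u in A, ∫ v in A, F (v - u))
        = (∫ u in A \ B, ∫ v in A, F (v - u)) + ∫ u in A ∩ B, ∫ v in A, F (v - u) := by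
      rw [← setIntegral_union (Set.disjoint_left.mpr fun x hx hx2 => hx.2 hx2.2) hABm
        (hg_int.mono_set Set.diff_subset) (hg_int.mono_set Set.inter_subset_left),
        Set.diff_union_inter]
    have hconst : (∫ u in A \ B, ∫ v in A, F (v - u)) = (volume (A \ B)).toReal * I := by
      rw [setIntegral_congr_fun (hAm.diff hBm) hg_eq, setIntegral_const, smul_eq_mul]; rfl
    have hmAB : (volume (A ∩ B)).toReal ≤ (volume B).toReal :=
      ENNReal.toReal_mono hBvol.ne (measure_mono Set.inter_subset_right)
    have hmAB0 : 0 ≤ (volume (A ∩ B)).toReal := ENNReal.toReal_nonneg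
    have hdiff : (volume (A \ B)).toReal = (volume A).toReal - (volume (A ∩ B)).toReal := by
      have h1 : A \ B = A \ (A ∩ B) := (Set.diff_self_inter).symm
      rw [h1, measure_diff Set.inter_subset_left hABm.nullMeasurableSet
        (lt_of_le_of_lt (measure_mono Set.inter_subset_left) hAvol).ne,
        ENNReal.toReal_sub_of_le (measure_mono Set.inter_subset_left) hAvol.ne]
    have herr : ‖∫ u in A ∩ B, ∫ v in A, F (v - u)‖ ≤ C * (volume (A ∩ B)).toReal := by
      apply norm_setIntegral_le_of_norm_le_const
        (lt_of_le_of_lt (measure_mono Set.inter_subset_left) hAvol)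
        (fun u _ => hg_bound u)
    calc ‖(∫ u in A, ∫ v in A, F (v - u)) - I * (volume A).toReal‖
        = ‖(-I) * (volume (A ∩ B)).toReal + ∫ u in A ∩ B, ∫ v in A, F (v - u)‖ := by
          rw [hsplit, hconst, hdiff]; ring_nf
      _ ≤ ‖(-I) * (volume (A ∩ B)).toReal‖ + ‖∫ u in A ∩ B, ∫ v in A, F (v - u)‖ :=
          norm_add_le _ _
      _ ≤ |I| * (volume (A ∩ B)).toReal + C * (volume (A ∩ B)).toReal := by
          rw [norm_mul, norm_neg, Real.norm_of_nonneg hmAB0]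
          exact add_le_add le_rfl herr
      _ = (|I| + C) * (volume (A ∩ B)).toReal := by ring
      _ ≤ (|I| + C) * (volume B).toReal := by
          apply mul_le_mul_of_nonneg_left hmAB
          positivity
  -- conclude by squeezing
  rw [← tendsto_sub_nhds_zero_iff]
  apply squeeze_zero_norm'
    (a := fun n => (|I| + C) * ((volume (cthickening R (frontier (W n)))).toReal
      / (volume (W n)).toReal))
  · filter_upwards [hvol.eventually_gt_atTop 0] with n hVn
    have hVne : (volume (W n)).toReal ≠ 0 := ne_of_gt hVn
    have h1 : (1 / (volume (W n)).toReal) * (∫ u in W n, ∫ v in W n, F (v - u)) - I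
        = (1 / (volume (W n)).toReal)
          * ((∫ u in W n, ∫ v in W n, F (v - u)) - I * (volume (W n)).toReal) := by
      field_simp
    rw [h1, norm_mul, Real.norm_of_nonneg (by positivity : (0:ℝ) ≤ 1 / (volume (W n)).toReal)]
    calc (1 / (volume (W n)).toReal)
          * ‖(∫ u in W n, ∫ v in W n, F (v - u)) - I * (volume (W n)).toReal‖
        ≤ (1 / (volume (W n)).toReal)
          * ((|I| + C) * (volume (cthickening R (frontier (W n)))).toReal) := by
          apply mul_le_mul_of_nonneg_left (key n)
          positivity
      _ = (|I| + C) * ((volume (cthickening R (frontier (W n)))).toReal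
          / (volume (W n)).toReal) := by field_simp
  · have := hbdry.const_mul (|I| + C)
    simpa using this
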